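/- There exist constants C > 0 and m₀ ≥ 1, depending only on μ, such that for all integers m, n with m₀ < m ≤ n and X_m ≤ X_n ≤ 2X_m, and every real number k, one has |∫_{0}^{X_m^{2/3}} ⟨x⟩^μ e^{ikx} h_m(x) h_n(x) dx| ≤ C · m^{-(1/12 - μ/4)} · n^{-(1/12 - μ/4)}. -/

import Mathlib

open Real MeasureTheory intervalIntegral

/-- Physicists' Hermite polynomials, as functions on `ℝ`. -/
noncomputable def physHermite : ℕ → ℝ → ℝ
  | 0, _ => 1
  | 1, x => 2 * x
  | n + 2, x => 2 * x * physHermite (n + 1) x - 2 * ((n : ℝ) + 1) * physHermite n x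

/-- The `j`-th Hermite function (for `j ≥ 1`), the `L²`-normalized eigenfunction of
`-d²/dx² + x²` with eigenvalue `2j - 1`. -/
noncomputable def hermiteFun (j : ℕ) (x : ℝ) : ℝ :=
  ((2 : ℝ) ^ (j - 1) * (Nat.factorial (j - 1) : ℝ) * Real.sqrt Real.pi) ^ (-(1 : ℝ) / 2) *
    Real.exp (-x ^ 2 / 2) * physHermite (j - 1) x

/-- The turning point `X_j = √(2j - 1)`. -/
noncomputable def Xpt (j : ℕ) : ℝ := Real.sqrt (2 * (j : ℝ) - 1)

/-- The oscillatory integrand `⟨x⟩^μ e^{ikx} h_m(x) h_n(x)`. -/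
noncomputable def osc (μ k : ℝ) (m n : ℕ) (x : ℝ) : ℂ :=
  (Real.sqrt (1 + x ^ 2) ^ μ : ℝ) * Complex.exp (Complex.I * k * x) *
    (hermiteFun m x : ℂ) * (hermiteFun n x : ℂ)

lemma pH_zero (x : ℝ) : physHermite 0 x = 1 := rfl
lemma pH_one (x : ℝ) : physHermite 1 x = 2 * x := rfl
lemma pH_add_two (n : ℕ) (x : ℝ) :
    physHermite (n + 2) x = 2 * x * physHermite (n + 1) x - 2 * ((n : ℝ) + 1) * physHermite n x := rfl

/-- formal derivative -/
noncomputable def pHD : ℕ → ℝ → ℝ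
  | 0, _ => 0
  | n + 1, x => 2 * ((n : ℝ) + 1) * physHermite n x

lemma hasDerivAt_pH_aux (n : ℕ) :
    (∀ x : ℝ, HasDerivAt (physHermite n) (pHD n x) x) ∧
    (∀ x : ℝ, HasDerivAt (physHermite (n + 1)) (pHD (n + 1) x) x) := by
  induction n with
  | zero =>
    constructor
    · intro x
      simpa [physHermite, pHD] using (hasDerivAt_const x (1:ℝ))
    · intro x
      have : HasDerivAt (fun y : ℝ => 2 * y) (2 * 1) x := (hasDerivAt_id x).const_mul 2
      simpa [physHermite, pHD] using this
  | succ n ih =>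
    refine ⟨ih.2, fun x => ?_⟩
    have h1 : HasDerivAt (fun y : ℝ => 2 * y * physHermite (n+1) y)
        (2 * 1 * physHermite (n+1) x + 2 * x * pHD (n+1) x) x :=
      ((hasDerivAt_id x).const_mul 2).mul (ih.2 x)
    have h2 : HasDerivAt (fun y : ℝ => 2 * ((n:ℝ)+1) * physHermite n y)
        (2 * ((n:ℝ)+1) * pHD n x) x := (ih.1 x).const_mul _
    have h3 := h1.fun_sub h2
    have heq : (fun y : ℝ => 2 * y * physHermite (n+1) y - 2 * ((n:ℝ)+1) * physHermite n y)
        = physHermite (n + 2) := by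
      funext y; rw [pH_add_two]
    rw [heq] at h3
    refine h3.congr_deriv (Eq.symm ?_)
    cases n with
    | zero => simp [pHD, physHermite]; ring
    | succ k =>
      simp only [pHD]
      push_cast
      linear_combination (2 * ((k:ℝ) + 2)) * (pH_add_two k x)
  
lemma hasDerivAt_pH (n : ℕ) (x : ℝ) : HasDerivAt (physHermite n) (pHD n x) x :=
  (hasDerivAt_pH_aux n).1 x

/-- unnormalized Hermite function -/
noncomputable def psi (d : ℕ) (x : ℝ) : ℝ := Real.exp (-x^2/2) * physHermite d x
noncomputable def psi1 (d : ℕ) (x : ℝ) : ℝ :=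
  Real.exp (-x^2/2) * (pHD d x - x * physHermite d x)

lemma hasDerivAt_gauss (x : ℝ) : HasDerivAt (fun y : ℝ => Real.exp (-y^2/2)) (Real.exp (-x^2/2) * (-x)) x := by
  have h1 : HasDerivAt (fun y : ℝ => -y^2/2) (-x) x := by
    have := ((hasDerivAt_pow 2 x).neg).div_const 2
    simpa using this.congr_deriv (by push_cast; ring)
  exact (Real.hasDerivAt_exp (-x^2/2)).comp x h1

lemma hasDerivAt_psi (d : ℕ) (x : ℝ) : HasDerivAt (psi d) (psi1 d x) x := by
  have h := (hasDerivAt_gauss x).mul (hasDerivAt_pH d x)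
  have : Real.exp (-x^2/2) * (-x) * physHermite d x + Real.exp (-x^2/2) * pHD d x
      = psi1 d x := by unfold psi1; ring
  rw [this] at h
  exact h

lemma pH_rec' (d : ℕ) (x : ℝ) : physHermite (d+1) x = 2 * x * physHermite d x - pHD d x := by
  cases d with
  | zero => simp [physHermite, pHD]
  | succ k => rw [pH_add_two]; simp [pHD]

lemma hasDerivAt_pHD (d : ℕ) (x : ℝ) :
    HasDerivAt (pHD d) ((2*(d:ℝ)) * pHD (d-1) x) x := by
  cases d with
  | zero =>
    rw [show pHD 0 = fun _ => (0:ℝ) from funext fun _ => rfl]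
    simpa using hasDerivAt_const x (0:ℝ)
  | succ k =>
    have := (hasDerivAt_pH k x).const_mul (2 * ((k:ℝ)+1))
    have heq : (fun y => 2 * ((k:ℝ)+1) * physHermite k y) = pHD (k+1) := rfl
    rw [heq] at this
    refine this.congr_deriv (Eq.symm ?_)
    push_cast
    ring

lemma pHD_ode (d : ℕ) (x : ℝ) :
    (2*(d:ℝ)) * pHD (d-1) x - 2*x*pHD d x + 2*(d:ℝ)*physHermite d x = 0 := by
  cases d with
  | zero => simp [pHD]
  | succ k =>
    simp only [pHD, Nat.add_sub_cancel]
    have := pH_rec' k x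
    cases k with
    | zero => simp [physHermite, pHD] at this ⊢; push_cast; linarith
    | succ r =>
      have hD : pHD (r+1) x = 2*((r:ℝ)+1)*physHermite r x := rfl
      push_cast
      push_cast at this hD
      linear_combination (2*((r:ℝ)+2)) * this - (2*((r:ℝ)+2)) * hD

lemma hasDerivAt_psi1 (d : ℕ) (x : ℝ) :
    HasDerivAt (psi1 d) ((x^2 - (2*(d:ℝ)+1)) * psi d x) x := by
  have hinner : HasDerivAt (fun y : ℝ => pHD d y - y * physHermite d y)
      ((2*(d:ℝ)) * pHD (d-1) x - (1 * physHermite d x + x * pHD d x)) x :=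
    (hasDerivAt_pHD d x).sub ((hasDerivAt_id x).mul (hasDerivAt_pH d x))
  have h := (hasDerivAt_gauss x).fun_mul hinner
  have heq : (fun y : ℝ => Real.exp (-y^2/2) * (pHD d y - y * physHermite d y)) = psi1 d := rfl
  rw [heq] at h
  refine h.congr_deriv (Eq.symm ?_)
  unfold psi
  have hode := pHD_ode d x
  linear_combination (-Real.exp (-x^2/2)) * hode

noncomputable def En (d : ℕ) (x : ℝ) : ℝ :=
  (psi1 d x)^2 + ((2*(d:ℝ)+1) - x^2) * (psi d x)^2

lemma hasDerivAt_En (d : ℕ) (x : ℝ) :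
    HasDerivAt (En d) (-2*x*(psi d x)^2) x := by
  have h1 : HasDerivAt (fun y => (psi1 d y)^2)
      (2 * psi1 d x * ((x^2 - (2*(d:ℝ)+1)) * psi d x)) x := by
    simpa using ((hasDerivAt_psi1 d x).fun_pow 2)
  have h2 : HasDerivAt (fun y : ℝ => (2*(d:ℝ)+1) - y^2) (-(2*x)) x := by
    simpa using ((hasDerivAt_pow 2 x).const_sub (2*(d:ℝ)+1))
  have h3 : HasDerivAt (fun y => (psi d y)^2) (2 * psi d x * psi1 d x) x := by
    simpa using ((hasDerivAt_psi d x).fun_pow 2)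
  have h4 := h1.fun_add (h2.fun_mul h3)
  have heq : (fun y => (psi1 d y)^2 + ((2*(d:ℝ)+1) - y^2) * (psi d y)^2) = En d := rfl
  rw [heq] at h4
  refine h4.congr_deriv (Eq.symm ?_)
  ring

lemma En_antitone (d : ℕ) : AntitoneOn (En d) (Set.Ici 0) := by
  have hdiff : ∀ x : ℝ, HasDerivAt (En d) (-2*x*(psi d x)^2) x := hasDerivAt_En d
  apply antitoneOn_of_deriv_nonpos (convex_Ici 0)
  · exact fun x _ => (hdiff x).continuousAt.continuousWithinAt
  · intro x hx
    exact (hdiff x).differentiableAt.differentiableWithinAt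
  · intro x hx
    rw [(hdiff x).deriv]
    rw [interior_Ici] at hx
    nlinarith [sq_nonneg (psi d x), le_of_lt (Set.mem_Ioi.mp hx)]

lemma En_le (d : ℕ) (x : ℝ) (hx : 0 ≤ x) : En d x ≤ En d 0 :=
  En_antitone d (Set.self_mem_Ici) hx hx

lemma pH_even_zero (r : ℕ) :
    physHermite (2*r) 0 = (-1)^r * ((2*r).factorial : ℝ) / (r.factorial : ℝ) := by
  induction r with
  | zero => simp [physHermite]
  | succ r ih =>
    have h2 : 2*(r+1) = (2*r) + 2 := by ring
    rw [h2, pH_add_two, ih]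
    have hfac : ((2*r+2).factorial : ℝ) = (2*(r:ℝ)+2) * (2*(r:ℝ)+1) * ((2*r).factorial : ℝ) := by
      rw [show 2*r+2 = (2*r+1) + 1 from rfl, Nat.factorial_succ, Nat.factorial_succ]
      push_cast; ring
    have hfr : ((r+1).factorial : ℝ) = ((r:ℝ)+1) * (r.factorial : ℝ) := by
      rw [Nat.factorial_succ]; push_cast; ring
    rw [hfac, hfr]
    have hr : (r.factorial : ℝ) ≠ 0 := Nat.cast_ne_zero.mpr (Nat.factorial_ne_zero r)
    have hr1 : ((r:ℝ)+1) ≠ 0 := by positivity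
    push_cast
    field_simp
    ring

lemma pH_odd_zero (r : ℕ) : physHermite (2*r+1) 0 = 0 := by
  induction r with
  | zero => simp [physHermite]
  | succ r ih =>
    have h2 : 2*(r+1)+1 = (2*r+1) + 2 := by ring
    rw [h2, pH_add_two, ih]
    simp

lemma cb_sqrt (s : ℕ) : (Nat.centralBinom s : ℝ) * Real.sqrt (3*(s:ℝ)+1) ≤ 4^s := by
  induction s with
  | zero => simp [Nat.centralBinom]
  | succ s ih =>
    have hs0 : (0:ℝ) ≤ (s:ℝ) := Nat.cast_nonneg s
    have hrec : ((s:ℝ)+1) * (Nat.centralBinom (s+1) : ℝ) = 2 * (2*(s:ℝ)+1) * (Nat.centralBinom s : ℝ) := by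
      have h := congrArg (fun n : ℕ => (n : ℝ)) (Nat.succ_mul_centralBinom_succ s)
      push_cast at h
      linarith
    set a := Real.sqrt (3*(s:ℝ)+1) with ha
    set b := Real.sqrt (3*((s:ℝ)+1)+1) with hb
    have ha2 : a^2 = 3*(s:ℝ)+1 := Real.sq_sqrt (by positivity)
    have hb2 : b^2 = 3*(s:ℝ)+4 := by
      rw [hb, Real.sq_sqrt (by positivity)]; ring
    have ha0 : 1 ≤ a := by
      nlinarith [ha2, hs0, Real.sqrt_nonneg (3*(s:ℝ)+1), sq_nonneg (a-1), sq_nonneg (a+1)]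
    have ha0' : 0 < a := lt_of_lt_of_le one_pos ha0
    have hb0 : 0 ≤ b := Real.sqrt_nonneg _
    have hcb0 : (0:ℝ) ≤ (Nat.centralBinom s : ℝ) := Nat.cast_nonneg _
    have e1 : (2 * (2*(s:ℝ)+1) * b)^2 = 4*(2*(s:ℝ)+1)^2*(3*(s:ℝ)+4) := by
      rw [mul_pow, hb2]; ring
    have e2 : (4 * ((s:ℝ)+1) * a)^2 = 16*((s:ℝ)+1)^2*(3*(s:ℝ)+1) := by
      rw [mul_pow, ha2]; ring
    have hsq : (2 * (2*(s:ℝ)+1) * b)^2 ≤ (4 * ((s:ℝ)+1) * a)^2 := by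
      rw [e1, e2]; nlinarith [hs0]
    have key : 2 * (2*(s:ℝ)+1) * b ≤ 4 * ((s:ℝ)+1) * a := by
      have h1 := Real.sqrt_le_sqrt hsq
      rw [Real.sqrt_sq (by positivity), Real.sqrt_sq (by positivity)] at h1
      exact h1
    have hs1 : (0:ℝ) < (s:ℝ)+1 := by positivity
    have hcb1 : (Nat.centralBinom (s+1) : ℝ) = 2 * (2*(s:ℝ)+1) * (Nat.centralBinom s : ℝ) / ((s:ℝ)+1) := by
      field_simp
      linear_combination hrec
    have hcast : (3*((s+1:ℕ):ℝ)+1) = 3*((s:ℝ)+1)+1 := by push_cast; ring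
    rw [hcb1, hcast, ← hb]
    rw [div_mul_eq_mul_div, div_le_iff₀ hs1]
    have h6 := mul_le_mul_of_nonneg_left key hcb0
    have h7 := mul_le_mul_of_nonneg_left ih (by positivity : (0:ℝ) ≤ 4 * ((s:ℝ)+1))
    have h8 : (4:ℝ)^(s+1) = 4 * 4^s := by ring
    rw [h8]
    nlinarith [h6, h7]

lemma one_le_sqrt_pi : (1:ℝ) ≤ Real.sqrt π := by
  rw [show (1:ℝ) = Real.sqrt 1 by simp]
  exact Real.sqrt_le_sqrt (by linarith [Real.pi_gt_three])

lemma En_zero (d : ℕ) : En d 0 = (pHD d 0)^2 + (2*(d:ℝ)+1) * (physHermite d 0)^2 := by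
  unfold En psi psi1
  norm_num

lemma pHD_even_zero (r : ℕ) : pHD (2*r) 0 = 0 := by
  cases r with
  | zero => rfl
  | succ r =>
    have h : 2*(r+1) = (2*r+1)+1 := by ring
    rw [h]
    show 2 * (((2*r+1 : ℕ):ℝ) + 1) * physHermite (2*r+1) 0 = 0
    rw [pH_odd_zero]
    ring

lemma cb_eq (r : ℕ) : ((2*r).factorial : ℝ) = (Nat.centralBinom r : ℝ) * (r.factorial : ℝ)^2 := by
  have h := Nat.choose_mul_factorial_mul_factorial (Nat.le_mul_of_pos_left r (by norm_num) : r ≤ 2*r)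
  have h2 : 2*r - r = r := by omega
  rw [h2] at h
  have := congrArg (fun n : ℕ => (n:ℝ)) h
  push_cast at this
  rw [Nat.centralBinom]
  push_cast
  nlinarith [this]

lemma E0_bound (d : ℕ) :
    ((2:ℝ)^d * (d.factorial : ℝ) * Real.sqrt π)⁻¹ * En d 0 ≤ 2 * Real.sqrt (2*(d:ℝ)+1) := by
  have hP : (1:ℝ) ≤ Real.sqrt π := one_le_sqrt_pi
  rcases Nat.even_or_odd d with ⟨r, hr⟩ | ⟨r, hr⟩
  · -- even case : d = r + r
    have hd : d = 2*r := by omega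
    subst hd
    set cb := (Nat.centralBinom r : ℝ) with hcb
    set F1 := (r.factorial : ℝ) with hF1
    set F2 := ((2*r).factorial : ℝ) with hF2
    have hF1pos : (0:ℝ) < F1 := by positivity -- fix below
    have hF2pos : (0:ℝ) < F2 := by positivity
    have hcb0 : (0:ℝ) ≤ cb := Nat.cast_nonneg _
    set lam := 2*((2*r:ℕ):ℝ)+1 with hlam
    have hlam' : lam = 4*(r:ℝ)+1 := by rw [hlam]; push_cast; ring
    set S := Real.sqrt lam with hS
    set A := Real.sqrt (3*(r:ℝ)+1) with hA
    have hS0 : 0 ≤ S := Real.sqrt_nonneg _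
    have hA0 : 0 ≤ A := Real.sqrt_nonneg _
    have hS2 : S^2 = lam := Real.sq_sqrt (by rw [hlam']; positivity)
    have hS2A : S ≤ 2*A := by
      rw [hS, hA]
      have h4 : (2:ℝ) * Real.sqrt (3*(r:ℝ)+1) = Real.sqrt (4*(3*(r:ℝ)+1)) := by
        rw [show (4:ℝ)*(3*(r:ℝ)+1) = 2^2*(3*(r:ℝ)+1) by ring,
          Real.sqrt_mul (by positivity), Real.sqrt_sq (by norm_num)]
      rw [h4]
      apply Real.sqrt_le_sqrt
      rw [hlam']; push_cast; linarith [Nat.cast_nonneg (α := ℝ) r]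
    -- value of En at 0
    have hEn : En (2*r) 0 = lam * (cb * F2) := by
      rw [En_zero, pHD_even_zero, pH_even_zero]
      have hsign : ((-1:ℝ)^r)^2 = 1 := by
        rw [← pow_mul, mul_comm, pow_mul]; norm_num
      have hH2 : ((-1:ℝ)^r * F2/F1)^2 = cb * F2 := by
        rw [mul_div_assoc, mul_pow, hsign, one_mul, div_pow]
        rw [div_eq_iff (by positivity)]
        linear_combination F2 * (cb_eq r)
      rw [hH2]
      push_cast [hlam]
      ring
    rw [hEn, inv_mul_eq_div, div_le_iff₀ (by positivity)]
    have h1 : lam * cb ≤ 2*S*4^r := by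
      calc lam * cb = S*(S*cb) := by rw [← hS2]; ring
        _ ≤ S*((2*A)*cb) := by
            apply mul_le_mul_of_nonneg_left _ hS0
            exact mul_le_mul_of_nonneg_right hS2A hcb0
        _ = 2*S*(cb*A) := by ring
        _ ≤ 2*S*(4^r) := by
            apply mul_le_mul_of_nonneg_left _ (by positivity)
            exact cb_sqrt r
    calc lam * (cb * F2) = (lam*cb)*F2 := by ring
      _ ≤ (2*S*4^r)*F2 := mul_le_mul_of_nonneg_right h1 hF2pos.le
      _ ≤ (2*S*4^r)*F2*Real.sqrt π := le_mul_of_one_le_right (by positivity) hP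
      _ = 2*S*((2:ℝ)^(2*r)*F2*Real.sqrt π) := by
          rw [pow_mul]; norm_num; ring
      _ = 2*Real.sqrt (2*((2*r:ℕ):ℝ)+1)*((2:ℝ)^(2*r)*F2*Real.sqrt π) := by rw [hS, hlam]
  · -- odd case : d = 2*r+1
    subst hr
    set cb := (Nat.centralBinom r : ℝ) with hcb
    set F1 := (r.factorial : ℝ) with hF1
    set F2 := ((2*r).factorial : ℝ) with hF2
    have hF1pos : (0:ℝ) < F1 := by positivity
    have hF2pos : (0:ℝ) < F2 := by positivity
    have hcb0 : (0:ℝ) ≤ cb := Nat.cast_nonneg _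
    set lam := 2*((2*r+1:ℕ):ℝ)+1 with hlam
    have hlam' : lam = 4*(r:ℝ)+3 := by rw [hlam]; push_cast; ring
    set S := Real.sqrt lam with hS
    set A := Real.sqrt (3*(r:ℝ)+1) with hA
    have hS0 : 0 ≤ S := Real.sqrt_nonneg _
    have hA0 : 0 ≤ A := Real.sqrt_nonneg _
    have hr0 : (0:ℝ) ≤ (r:ℝ) := Nat.cast_nonneg r
    have h2 : 2*(r:ℝ)+1 ≤ S*A := by
      have : S*A = Real.sqrt (lam*(3*(r:ℝ)+1)) := by
        rw [hS, hA, ← Real.sqrt_mul (by rw [hlam']; positivity)]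
      rw [this]
      have h21 : 2*(r:ℝ)+1 = Real.sqrt ((2*(r:ℝ)+1)^2) := by
        rw [Real.sqrt_sq (by positivity)]
      rw [h21]
      apply Real.sqrt_le_sqrt
      rw [hlam']; nlinarith [hr0]
    have hEn : En (2*r+1) 0 = 4*(2*(r:ℝ)+1)^2 * (cb * F2) := by
      rw [En_zero, pH_odd_zero]
      have hD : pHD (2*r+1) 0 = 2*(((2*r:ℕ):ℝ)+1) * physHermite (2*r) 0 := rfl
      rw [hD, pH_even_zero]
      have hsign : ((-1:ℝ)^r)^2 = 1 := by
        rw [← pow_mul, mul_comm, pow_mul]; norm_num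
      have hH2 : ((-1:ℝ)^r * F2/F1)^2 = cb * F2 := by
        rw [mul_div_assoc, mul_pow, hsign, one_mul, div_pow]
        rw [div_eq_iff (by positivity)]
        linear_combination F2 * (cb_eq r)
      push_cast
      rw [mul_pow]
      rw [show ((-1:ℝ)^r * F2/F1)^2 = cb * F2 from hH2]  -- may need adjusting
      ring
    rw [hEn, inv_mul_eq_div, div_le_iff₀ (by positivity)]
    have h1 : (2*(r:ℝ)+1) * cb ≤ S*4^r := by
      calc (2*(r:ℝ)+1)*cb ≤ (S*A)*cb := mul_le_mul_of_nonneg_right h2 hcb0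
        _ = S*(cb*A) := by ring
        _ ≤ S*(4^r) := mul_le_mul_of_nonneg_left (cb_sqrt r) hS0
    have hfac : ((2*r+1).factorial : ℝ) = (2*(r:ℝ)+1) * F2 := by
      rw [Nat.factorial_succ]; push_cast; ring
    calc 4*(2*(r:ℝ)+1)^2 * (cb * F2)
        = 4*(2*(r:ℝ)+1)*F2*((2*(r:ℝ)+1)*cb) := by ring
      _ ≤ 4*(2*(r:ℝ)+1)*F2*(S*4^r) := by
          apply mul_le_mul_of_nonneg_left h1 (by positivity)
      _ ≤ 4*(2*(r:ℝ)+1)*F2*(S*4^r)*Real.sqrt π := le_mul_of_one_le_right (by positivity) hP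
      _ = 2*S*((2:ℝ)^(2*r+1)*((2*(r:ℝ)+1)*F2)*Real.sqrt π) := by
          rw [pow_succ, pow_mul]; norm_num; ring
      _ = 2*Real.sqrt (2*((2*r+1:ℕ):ℝ)+1)*((2:ℝ)^(2*r+1)*((2*r+1).factorial : ℝ)*Real.sqrt π) := by
          rw [hS, hlam, hfac]


lemma herm_pointwise (j : ℕ) (hj : 5 ≤ j) {x : ℝ} (hx0 : 0 ≤ x)
    (hx : x ≤ Xpt j ^ ((2:ℝ)/3)) : |hermiteFun j x| ≤ 2 * (j:ℝ) ^ (-(1:ℝ)/4) := by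
  obtain ⟨d, rfl⟩ : ∃ d, j = d + 1 := ⟨j - 1, by omega⟩
  set lam : ℝ := 2*(d:ℝ)+1 with hlamdef
  have hlam9 : (9:ℝ) ≤ lam := by
    have : (4:ℕ) ≤ d := by omega
    have := (Nat.cast_le (α := ℝ)).mpr this
    rw [hlamdef]; push_cast at this ⊢; linarith
  have hlampos : (0:ℝ) < lam := by linarith
  set B : ℝ := (2:ℝ)^d * (d.factorial : ℝ) * Real.sqrt π with hB
  have hBpos : 0 < B := by
    rw [hB]
    have := Real.sqrt_pos.mpr Real.pi_pos
    positivity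
  set c : ℝ := B ^ (-(1:ℝ)/2) with hc
  have hherm : ∀ y : ℝ, hermiteFun (d+1) y = c * psi d y := by
    intro y
    rw [hermiteFun, psi]
    simp only [Nat.add_sub_cancel]
    rw [hc, hB]
    ring
  have hc2 : c^2 = B⁻¹ := by
    rw [hc, ← Real.rpow_natCast (B ^ (-(1:ℝ)/2)) 2, ← Real.rpow_mul hBpos.le]
    norm_num
    rw [Real.rpow_neg_one]
  -- lam - x^2 ≥ lam/2 on the interval
  have hXpt : Xpt (d+1) = lam ^ ((1:ℝ)/2) := by
    rw [Xpt, Real.sqrt_eq_rpow]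
    congr 1
    push_cast
    rw [hlamdef]
    ring
  have hxT : x ≤ lam ^ ((1:ℝ)/3) := by
    rw [hXpt, ← Real.rpow_mul hlampos.le] at hx
    norm_num at hx
    exact hx
  have hcube : (2:ℝ) ≤ lam ^ ((1:ℝ)/3) := by
    have h8 : ((8:ℝ)) ^ ((1:ℝ)/3) = 2 := by
      rw [show (8:ℝ) = 2^(3:ℕ) by norm_num, ← Real.rpow_natCast 2 3,
        ← Real.rpow_mul (by norm_num : (0:ℝ) ≤ 2)]
      norm_num
    rw [← h8]
    exact Real.rpow_le_rpow (by norm_num) (by linarith) (by norm_num)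
  have hx2 : x^2 ≤ lam ^ ((2:ℝ)/3) := by
    have := mul_le_mul hxT hxT hx0 (le_trans (by norm_num) hcube)
    calc x^2 = x*x := sq x
      _ ≤ lam ^ ((1:ℝ)/3) * lam ^ ((1:ℝ)/3) := this
      _ = lam ^ ((2:ℝ)/3) := by
          rw [← Real.rpow_add hlampos]; norm_num
  have h23 : lam ^ ((2:ℝ)/3) ≤ lam / 2 := by
    have hsplit : lam = lam ^ ((2:ℝ)/3) * lam ^ ((1:ℝ)/3) := by
      rw [← Real.rpow_add hlampos]
      norm_num
    have hpow0 : 0 ≤ lam ^ ((2:ℝ)/3) := Real.rpow_nonneg hlampos.le _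
    nlinarith [mul_le_mul_of_nonneg_left hcube hpow0]
  have hgap : lam / 2 ≤ lam - x^2 := by linarith
  -- energy estimate
  have hEnergy : (lam - x^2) * (psi d x)^2 ≤ En d 0 := by
    have h1 : En d x ≤ En d 0 := En_le d x hx0
    have h2 : (lam - x^2) * (psi d x)^2 ≤ En d x := by
      rw [En]
      nlinarith [sq_nonneg (psi1 d x)]
    linarith
  have hmain : (lam - x^2) * (hermiteFun (d+1) x)^2 ≤ 2 * Real.sqrt lam := by
    have hE0 := E0_bound d
    rw [← hB] at hE0
    have hstep : (lam - x^2) * (hermiteFun (d+1) x)^2 = B⁻¹ * ((lam - x^2) * (psi d x)^2) := by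
      rw [hherm x, mul_pow, hc2]; ring
    rw [hstep]
    calc B⁻¹ * ((lam - x^2) * (psi d x)^2) ≤ B⁻¹ * En d 0 := by
          apply mul_le_mul_of_nonneg_left hEnergy (inv_nonneg.mpr hBpos.le)
      _ ≤ 2 * Real.sqrt (2*(d:ℝ)+1) := hE0
      _ = 2 * Real.sqrt lam := by rw [hlamdef]
  have hsqlam : Real.sqrt lam = lam ^ ((1:ℝ)/2) := Real.sqrt_eq_rpow lam
  have hh2 : (hermiteFun (d+1) x)^2 ≤ 4 * lam ^ (-(1:ℝ)/2) := by
    have hh0 : 0 ≤ (hermiteFun (d+1) x)^2 := sq_nonneg _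
    have h5 : (lam/2) * (hermiteFun (d+1) x)^2 ≤ 2 * lam ^ ((1:ℝ)/2) := by
      calc (lam/2) * (hermiteFun (d+1) x)^2 ≤ (lam - x^2) * (hermiteFun (d+1) x)^2 :=
            mul_le_mul_of_nonneg_right hgap hh0
        _ ≤ 2 * Real.sqrt lam := hmain
        _ = 2 * lam ^ ((1:ℝ)/2) := by rw [hsqlam]
    have hinv : lam ^ ((1:ℝ)/2) * lam⁻¹ = lam ^ (-(1:ℝ)/2) := by
      rw [← Real.rpow_neg_one lam, ← Real.rpow_add hlampos]
      norm_num
    have h10 : (hermiteFun (d+1) x)^2 ≤ 2*lam^((1:ℝ)/2) / (lam/2) := by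
      rw [le_div_iff₀ (by linarith : (0:ℝ) < lam/2)]
      calc (hermiteFun (d+1) x)^2 * (lam/2) = (lam/2)*(hermiteFun (d+1) x)^2 := by ring
        _ ≤ 2*lam^((1:ℝ)/2) := h5
    have h11 : 2*lam^((1:ℝ)/2) / (lam/2) = 4 * lam ^ (-(1:ℝ)/2) := by
      rw [← hinv]
      field_simp
      ring
    rw [← h11]
    exact h10
  have habs : |hermiteFun (d+1) x| ≤ 2 * lam ^ (-(1:ℝ)/4) := by
    have h6 : |hermiteFun (d+1) x| = Real.sqrt ((hermiteFun (d+1) x)^2) := (Real.sqrt_sq_eq_abs _).symm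
    rw [h6]
    have h7 : Real.sqrt (4 * lam ^ (-(1:ℝ)/2)) = 2 * lam ^ (-(1:ℝ)/4) := by
      rw [show (4:ℝ) * lam ^ (-(1:ℝ)/2) = 2^2 * lam ^ (-(1:ℝ)/2) by norm_num,
        Real.sqrt_mul (by positivity), Real.sqrt_sq (by norm_num),
        Real.sqrt_eq_rpow, ← Real.rpow_mul hlampos.le]
      norm_num
    rw [← h7]
    exact Real.sqrt_le_sqrt hh2
  calc |hermiteFun (d+1) x| ≤ 2 * lam ^ (-(1:ℝ)/4) := habs
    _ ≤ 2 * ((d+1:ℕ):ℝ) ^ (-(1:ℝ)/4) := by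
        apply mul_le_mul_of_nonneg_left _ (by norm_num)
        apply Real.rpow_le_rpow_of_nonpos (by positivity) _ (by norm_num)
        rw [hlamdef]; push_cast; linarith [Nat.cast_nonneg (α := ℝ) d]


set_option maxHeartbeats 1000000 in
/-- estimate on `[0, X_m^{2/3}]` when `X_m ≤ X_n ≤ 2X_m`. -/
theorem hermite_oscillatory_zero_Xm23 (μ : ℝ) (hμ0 : 0 ≤ μ) (hμ1 : μ < 1 / 3) :
    ∃ C : ℝ, 0 < C ∧ ∃ m₀ : ℕ, 1 ≤ m₀ ∧ ∀ m n : ℕ, m₀ < m → m ≤ n →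
      Xpt m ≤ Xpt n → Xpt n ≤ 2 * Xpt m → ∀ k : ℝ,
      ‖∫ x in (0 : ℝ)..((Xpt m) ^ ((2 : ℝ) / 3)), osc μ k m n x‖ ≤
        C * (m : ℝ) ^ (-(1 / 12 - μ / 4)) * (n : ℝ) ^ (-(1 / 12 - μ / 4)) := by
  refine ⟨16, by norm_num, 5, by norm_num, fun m n hm hmn hXmn _ k => ?_⟩
  have hm6 : 6 ≤ m := hm
  have hn6 : 6 ≤ n := le_trans hm6 hmn
  have hm1 : (1:ℝ) ≤ (m:ℝ) := by exact_mod_cast Nat.one_le_iff_ne_zero.mpr (by omega)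
  have hn1 : (1:ℝ) ≤ (n:ℝ) := by exact_mod_cast Nat.one_le_iff_ne_zero.mpr (by omega)
  have hmn' : (m:ℝ) ≤ (n:ℝ) := by exact_mod_cast hmn
  have hmpos : (0:ℝ) < m := by linarith
  have hnpos : (0:ℝ) < n := by linarith
  set lam : ℝ := 2*(m:ℝ)-1 with hlamdef
  have hlam11 : (11:ℝ) ≤ lam := by
    have : (6:ℝ) ≤ (m:ℝ) := by exact_mod_cast hm6
    rw [hlamdef]; linarith
  have hlampos : (0:ℝ) < lam := by linarith
  set T : ℝ := Xpt m ^ ((2:ℝ)/3) with hT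
  have hXm : Xpt m = lam ^ ((1:ℝ)/2) := by
    rw [Xpt, Real.sqrt_eq_rpow, hlamdef]
  have hTlam : T = lam ^ ((1:ℝ)/3) := by
    rw [hT, hXm, ← Real.rpow_mul hlampos.le]
    norm_num
  have hT2 : (2:ℝ) ≤ T := by
    rw [hTlam]
    have h8 : ((8:ℝ)) ^ ((1:ℝ)/3) = 2 := by
      rw [show (8:ℝ) = 2^(3:ℕ) by norm_num, ← Real.rpow_natCast 2 3,
        ← Real.rpow_mul (by norm_num : (0:ℝ) ≤ 2)]
      norm_num
    rw [← h8]
    exact Real.rpow_le_rpow (by norm_num) (by linarith) (by norm_num)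
  have hT0 : 0 ≤ T := by linarith
  -- pointwise bound on the integrand
  set Cb : ℝ := 2 * lam ^ (μ/3) * (2 * (m:ℝ) ^ (-(1:ℝ)/4)) * (2 * (n:ℝ) ^ (-(1:ℝ)/4)) with hCb
  have hbound : ∀ x ∈ Set.uIoc (0:ℝ) T, ‖osc μ k m n x‖ ≤ Cb := by
    intro x hx
    rw [Set.uIoc_of_le hT0] at hx
    obtain ⟨hx0, hxT⟩ := hx
    have hx0' : (0:ℝ) ≤ x := hx0.le
    -- norm of the integrand
    have hnorm : ‖osc μ k m n x‖
        = Real.sqrt (1+x^2) ^ μ * |hermiteFun m x| * |hermiteFun n x| := by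
      rw [osc, norm_mul, norm_mul, norm_mul, Complex.norm_real, Complex.norm_real,
        Complex.norm_real, Real.norm_eq_abs, Real.norm_eq_abs, Real.norm_eq_abs]
      have he : ‖Complex.exp (Complex.I * k * x)‖ = 1 := by
        rw [Complex.norm_exp]
        simp
      rw [he, abs_of_nonneg (Real.rpow_nonneg (Real.sqrt_nonneg _) μ)]
      ring
    rw [hnorm]
    -- weight bound
    have hw : Real.sqrt (1+x^2) ^ μ ≤ 2 * lam ^ (μ/3) := by
      have e1 : Real.sqrt (1+x^2) ^ μ = (1+x^2) ^ (μ/2) := by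
        rw [Real.sqrt_eq_rpow, ← Real.rpow_mul (by positivity),
          show (1:ℝ)/2*μ = μ/2 by ring]
      have e2 : (1:ℝ) + x^2 ≤ 2 * lam ^ ((2:ℝ)/3) := by
        have hxT2 : x^2 ≤ T^2 := by nlinarith
        have hTsq : T^2 = lam ^ ((2:ℝ)/3) := by
          rw [hTlam, ← Real.rpow_natCast (lam ^ ((1:ℝ)/3)) 2, ← Real.rpow_mul hlampos.le]
          norm_num
        have h1T : (1:ℝ) ≤ lam ^ ((2:ℝ)/3) := by
          rw [← hTsq]; nlinarith
        rw [← hTsq]; nlinarith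
      have e3 : ((1:ℝ)+x^2) ^ (μ/2) ≤ (2 * lam ^ ((2:ℝ)/3)) ^ (μ/2) :=
        Real.rpow_le_rpow (by positivity) e2 (by linarith)
      have e4 : ((2:ℝ) * lam ^ ((2:ℝ)/3)) ^ (μ/2) = 2 ^ (μ/2) * lam ^ (μ/3) := by
        rw [Real.mul_rpow (by norm_num) (Real.rpow_nonneg hlampos.le _),
          ← Real.rpow_mul hlampos.le, show (2:ℝ)/3*(μ/2) = μ/3 by ring]
      have e5 : (2:ℝ) ^ (μ/2) ≤ 2 := by
        calc (2:ℝ) ^ (μ/2) ≤ 2 ^ (1:ℝ) :=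
              Real.rpow_le_rpow_of_exponent_le (by norm_num) (by linarith)
          _ = 2 := Real.rpow_one 2
      calc Real.sqrt (1+x^2) ^ μ = ((1:ℝ)+x^2) ^ (μ/2) := e1
        _ ≤ 2 ^ (μ/2) * lam ^ (μ/3) := by rw [← e4]; exact e3
        _ ≤ 2 * lam ^ (μ/3) := by
            apply mul_le_mul_of_nonneg_right e5 (Real.rpow_nonneg hlampos.le _)
    -- hermite bounds
    have hhm : |hermiteFun m x| ≤ 2 * (m:ℝ) ^ (-(1:ℝ)/4) :=
      herm_pointwise m (by omega) hx0' hxT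
    have hhn : |hermiteFun n x| ≤ 2 * (n:ℝ) ^ (-(1:ℝ)/4) := by
      apply herm_pointwise n (by omega) hx0'
      calc x ≤ T := hxT
        _ ≤ Xpt n ^ ((2:ℝ)/3) := by
            rw [hT]
            exact Real.rpow_le_rpow (Real.sqrt_nonneg _) hXmn (by norm_num)
    rw [hCb]
    have h0w : (0:ℝ) ≤ Real.sqrt (1+x^2) ^ μ := Real.rpow_nonneg (Real.sqrt_nonneg _) μ
    have h0m : (0:ℝ) ≤ |hermiteFun m x| := abs_nonneg _
    have h0n : (0:ℝ) ≤ |hermiteFun n x| := abs_nonneg _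
    apply mul_le_mul (mul_le_mul hw hhm h0m (by positivity)) hhn h0n (by positivity)
  have hint := intervalIntegral.norm_integral_le_of_norm_le_const hbound
  rw [sub_zero, abs_of_nonneg hT0] at hint
  -- arithmetic
  have harith : Cb * T ≤ 16 * (m:ℝ) ^ (-(1/12 - μ/4)) * (n:ℝ) ^ (-(1/12 - μ/4)) := by
    have hlam2m : lam ≤ 2*(m:ℝ) := by rw [hlamdef]; linarith
    have s1 : lam ^ (μ/3) * lam ^ ((1:ℝ)/3) = lam ^ (μ/3 + 1/3) := by
      rw [← Real.rpow_add hlampos]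
    have s2 : lam ^ (μ/3 + 1/3) ≤ 2 * (m:ℝ) ^ (μ/3 + 1/3) := by
      have e0 : (0:ℝ) ≤ μ/3 + 1/3 := by linarith
      calc lam ^ (μ/3 + 1/3) ≤ (2*(m:ℝ)) ^ (μ/3 + 1/3) :=
            Real.rpow_le_rpow hlampos.le hlam2m e0
        _ = 2 ^ (μ/3 + 1/3) * (m:ℝ) ^ (μ/3 + 1/3) :=
            Real.mul_rpow (by norm_num) (by positivity)
        _ ≤ 2 * (m:ℝ) ^ (μ/3 + 1/3) := by
            apply mul_le_mul_of_nonneg_right _ (by positivity)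
            calc (2:ℝ) ^ (μ/3 + 1/3) ≤ 2 ^ (1:ℝ) :=
                  Real.rpow_le_rpow_of_exponent_le (by norm_num) (by linarith)
              _ = 2 := Real.rpow_one 2
    have step1 : Cb * T ≤ 16 * ((m:ℝ) ^ (μ/3 + 1/3) * (m:ℝ) ^ (-(1:ℝ)/4)) * (n:ℝ) ^ (-(1:ℝ)/4) := by
      rw [hCb, hTlam]
      have hm14 : (0:ℝ) ≤ (m:ℝ) ^ (-(1:ℝ)/4) := by positivity
      have hn14 : (0:ℝ) ≤ (n:ℝ) ^ (-(1:ℝ)/4) := by positivity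
      calc 2 * lam ^ (μ/3) * (2 * (m:ℝ) ^ (-(1:ℝ)/4)) * (2 * (n:ℝ) ^ (-(1:ℝ)/4)) * lam ^ ((1:ℝ)/3)
          = 8 * (lam ^ (μ/3) * lam ^ ((1:ℝ)/3)) * (m:ℝ) ^ (-(1:ℝ)/4) * (n:ℝ) ^ (-(1:ℝ)/4) := by
            ring
        _ = 8 * lam ^ (μ/3 + 1/3) * (m:ℝ) ^ (-(1:ℝ)/4) * (n:ℝ) ^ (-(1:ℝ)/4) := by rw [s1]
        _ ≤ 8 * (2 * (m:ℝ) ^ (μ/3 + 1/3)) * (m:ℝ) ^ (-(1:ℝ)/4) * (n:ℝ) ^ (-(1:ℝ)/4) := by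
            apply mul_le_mul_of_nonneg_right _ hn14
            apply mul_le_mul_of_nonneg_right _ hm14
            apply mul_le_mul_of_nonneg_left s2 (by norm_num)
        _ = 16 * ((m:ℝ) ^ (μ/3 + 1/3) * (m:ℝ) ^ (-(1:ℝ)/4)) * (n:ℝ) ^ (-(1:ℝ)/4) := by ring
    have step2 : (m:ℝ) ^ (μ/3 + 1/3) * (m:ℝ) ^ (-(1:ℝ)/4)
        = (m:ℝ) ^ (-(1/12 - μ/4)) * (m:ℝ) ^ (μ/12 + 1/6) := by
      rw [← Real.rpow_add hmpos, ← Real.rpow_add hmpos]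
      ring_nf
    have step3 : (m:ℝ) ^ (μ/12 + 1/6) * (n:ℝ) ^ (-(1:ℝ)/4) ≤ (n:ℝ) ^ (-(1/12 - μ/4)) := by
      have e0 : (0:ℝ) ≤ μ/12 + 1/6 := by linarith
      calc (m:ℝ) ^ (μ/12 + 1/6) * (n:ℝ) ^ (-(1:ℝ)/4)
          ≤ (n:ℝ) ^ (μ/12 + 1/6) * (n:ℝ) ^ (-(1:ℝ)/4) := by
            apply mul_le_mul_of_nonneg_right
              (Real.rpow_le_rpow hmpos.le hmn' e0) (by positivity)
        _ = (n:ℝ) ^ (μ/12 + 1/6 + -(1:ℝ)/4) := by rw [← Real.rpow_add hnpos]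
        _ ≤ (n:ℝ) ^ (-(1/12 - μ/4)) := by
            apply Real.rpow_le_rpow_of_exponent_le hn1
            linarith
    calc Cb * T ≤ 16 * ((m:ℝ) ^ (μ/3 + 1/3) * (m:ℝ) ^ (-(1:ℝ)/4)) * (n:ℝ) ^ (-(1:ℝ)/4) := step1
      _ = 16 * (m:ℝ) ^ (-(1/12 - μ/4)) * ((m:ℝ) ^ (μ/12 + 1/6) * (n:ℝ) ^ (-(1:ℝ)/4)) := by
          rw [step2]; ring
      _ ≤ 16 * (m:ℝ) ^ (-(1/12 - μ/4)) * (n:ℝ) ^ (-(1/12 - μ/4)) := by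
          apply mul_le_mul_of_nonneg_left step3 (by positivity)
  exact le_trans hint harith
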